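/- For every real m×n matrix M and every m×m real positive definite matrix Γ, one has (tr((M Mᵀ)^{1/2}))² ≤ tr(Mᵀ Γ⁻¹ M) · tr(Γ). -/

import Mathlib

open Matrix

/-- Over `ℝ`, `M * Mᵀ` is positive semidefinite. -/
theorem posSemidef_self_mul_transpose {m n : ℕ} (M : Matrix (Fin m) (Fin n) ℝ) :
    (M * Mᵀ).PosSemidef := by
  simpa [Matrix.conjTranspose_eq_transpose_of_trivial] using
    Matrix.posSemidef_self_mul_conjTranspose M

/-- Frobenius Cauchy–Schwarz for real square matrices. -/
theorem trace_cs {m : ℕ} (A B : Matrix (Fin m) (Fin m) ℝ) :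
    (Aᵀ * B).trace ^ 2 ≤ (Aᵀ * A).trace * (Bᵀ * B).trace := by
  have h : ∀ (C D : Matrix (Fin m) (Fin m) ℝ),
      (Cᵀ * D).trace = ∑ p : Fin m × Fin m, C p.1 p.2 * D p.1 p.2 := by
    intro C D
    rw [Matrix.trace, Fintype.sum_prod_type_right]
    simp [Matrix.diag, Matrix.mul_apply, Matrix.transpose_apply, mul_comm]
  rw [h A B, h A A, h B B]
  simpa [sq] using Finset.sum_mul_sq_le_sq_mul_sq Finset.univ
    (fun p : Fin m × Fin m => A p.1 p.2) (fun p => B p.1 p.2)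

/-- The square root of a positive semidefinite matrix, as formerly in Mathlib. -/
noncomputable def Matrix.PosSemidef.sqrt {n : Type*} {𝕜 : Type*} [Fintype n] [DecidableEq n]
    [RCLike 𝕜] [PartialOrder 𝕜] {A : Matrix n n 𝕜} (hA : A.PosSemidef) : Matrix n n 𝕜 :=
  hA.1.eigenvectorUnitary.1 * diagonal ((↑) ∘ (Real.sqrt ∘ hA.1.eigenvalues)) *
    (star hA.1.eigenvectorUnitary : Matrix n n 𝕜)

theorem psd_sqrt_posSemidef {m : ℕ} {A : Matrix (Fin m) (Fin m) ℝ} (hA : A.PosSemidef) :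
    hA.sqrt.PosSemidef := by
  unfold Matrix.PosSemidef.sqrt
  have hd : (diagonal ((RCLike.ofReal (K := ℝ)) ∘ (Real.sqrt ∘ hA.1.eigenvalues)) :
      Matrix (Fin m) (Fin m) ℝ).PosSemidef :=
    posSemidef_diagonal_iff.mpr (fun i => by simp [Real.sqrt_nonneg])
  have := hd.mul_mul_conjTranspose_same (hA.1.eigenvectorUnitary : Matrix (Fin m) (Fin m) ℝ)
  exact this

theorem psd_sqrt_mul_self {m : ℕ} {A : Matrix (Fin m) (Fin m) ℝ} (hA : A.PosSemidef) :
    hA.sqrt * hA.sqrt = A := by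
  unfold Matrix.PosSemidef.sqrt
  set U : Matrix (Fin m) (Fin m) ℝ := (hA.1.eigenvectorUnitary : Matrix (Fin m) (Fin m) ℝ) with hU
  set D : Matrix (Fin m) (Fin m) ℝ :=
    diagonal ((RCLike.ofReal (K := ℝ)) ∘ (Real.sqrt ∘ hA.1.eigenvalues)) with hDd
  have hu : star U * U = 1 :=
    Unitary.coe_star_mul_self _
  have hD : D * D = diagonal (RCLike.ofReal ∘ hA.1.eigenvalues) := by
    rw [hDd, diagonal_mul_diagonal]
    congr 1
    funext i
    simp [Real.mul_self_sqrt (hA.eigenvalues_nonneg i)]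
  have e : U * D * star U * (U * D * star U) = U * (D * D) * star U := by
    calc _ = U * D * (star U * U) * D * star U := by
          simp only [Matrix.mul_assoc]
      _ = _ := by rw [hu, Matrix.mul_one]; simp only [Matrix.mul_assoc]
  rw [e, hD]
  conv_rhs => rw [hA.1.spectral_theorem]
  simp [Unitary.conjStarAlgAut_apply, hU]

/-- Cauchy–Schwarz-type inequality underlying the lower bound of Lemma 1: for every real
`m × n` matrix `M` and every `m × m` real positive definite matrix `Γ`,
`(tr ((M Mᵀ) ^ (1/2)))² ≤ tr (Mᵀ Γ⁻¹ M) * tr Γ`. -/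
theorem sq_trace_sqrt_le_trace_mul_trace
    {m n : ℕ} (M : Matrix (Fin m) (Fin n) ℝ) (Γ : Matrix (Fin m) (Fin m) ℝ)
    (hΓ : Γ.PosDef) :
    ((posSemidef_self_mul_transpose M).sqrt.trace) ^ 2
      ≤ (Mᵀ * Γ⁻¹ * M).trace * Γ.trace := by
  set S := (posSemidef_self_mul_transpose M).sqrt with hSdef
  have hS : S.PosSemidef := psd_sqrt_posSemidef (posSemidef_self_mul_transpose M)
  have hSS : S * S = M * Mᵀ := psd_sqrt_mul_self (posSemidef_self_mul_transpose M)
  have hSsymm : Sᵀ = S := by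
    have := hS.1
    rwa [Matrix.IsHermitian, Matrix.conjTranspose_eq_transpose_of_trivial] at this
  set R := hΓ.posSemidef.sqrt with hRdef
  have hR : R.PosSemidef := psd_sqrt_posSemidef hΓ.posSemidef
  have hRR : R * R = Γ := psd_sqrt_mul_self hΓ.posSemidef
  have hRsymm : Rᵀ = R := by
    have := hR.1
    rwa [Matrix.IsHermitian, Matrix.conjTranspose_eq_transpose_of_trivial] at this
  -- R is invertible
  have hdet : IsUnit R.det := by
    have h2 : R.det * R.det = Γ.det := by rw [← Matrix.det_mul, hRR]
    have : R.det ≠ 0 := by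
      intro h
      rw [h, mul_zero] at h2
      exact hΓ.det_pos.ne' h2.symm
    exact this.isUnit
  have hinv : R⁻¹ * R = 1 := Matrix.nonsing_inv_mul R hdet
  have hΓinv : Γ⁻¹ = R⁻¹ * R⁻¹ := by rw [← hRR, Matrix.mul_inv_rev]
  have hRinvsymm : (R⁻¹)ᵀ = R⁻¹ := by rw [Matrix.transpose_nonsing_inv, hRsymm]
  have key := trace_cs (R⁻¹ * S) R
  have hAT : (R⁻¹ * S)ᵀ = S * R⁻¹ := by rw [Matrix.transpose_mul, hSsymm, hRinvsymm]
  rw [hAT] at key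
  have e1 : (S * R⁻¹ * R).trace = S.trace := by
    rw [Matrix.mul_assoc, hinv, Matrix.mul_one]
  have e2 : (S * R⁻¹ * (R⁻¹ * S)).trace = (Mᵀ * Γ⁻¹ * M).trace := by
    have : S * R⁻¹ * (R⁻¹ * S) = S * Γ⁻¹ * S := by
      rw [hΓinv]; noncomm_ring
    have l : (S * Γ⁻¹ * S).trace = (Γ⁻¹ * (M * Mᵀ)).trace := by
      rw [Matrix.mul_assoc, Matrix.trace_mul_comm, Matrix.mul_assoc, hSS]
    have r : (Mᵀ * Γ⁻¹ * M).trace = (Γ⁻¹ * (M * Mᵀ)).trace := by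
      rw [Matrix.mul_assoc, Matrix.trace_mul_comm, ← Matrix.mul_assoc]
    rw [this, l, r]
  have e3 : (Rᵀ * R).trace = Γ.trace := by rw [hRsymm, hRR]
  rw [e1, e2, e3] at key
  exact key
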